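/- arXiv:1706.05611 — 6 statements merged into one kernel-verified Lean document; each statement's English description precedes it below -/
import Mathlib

section
/- Let G be a finite group, M a normal subgroup of G with trivial centre, and C = C_G(M). Then for any g ∈ C and h ∈ M, the conjugacy class size |(gh)^G| is divisible by both |g^C| (the size of the conjugacy class of g in C) and |h^M| (the size of the conjugacy class of h in M). -/
open Pointwise

private lemma card_isConj_eq_index {G : Type*} [Group G] (x : G) :
    Nat.card {y : G // IsConj x y} = (Subgroup.centralizer {x}).index := by
  rw [Subgroup.centralizer_eq_comap_stabilizer]
  erw [Subgroup.index_comap_of_surjective _ ConjAct.toConjAct.surjective]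
  have e1 : {y : G // IsConj x y} ≃ MulAction.orbit (ConjAct G) x :=
    Equiv.subtypeEquivRight fun y => by rw [ConjAct.mem_orbit_conjAct, isConj_comm]
  calc Nat.card {y : G // IsConj x y}
      = Nat.card (MulAction.orbit (ConjAct G) x) := Nat.card_congr e1
    _ = Nat.card (ConjAct G ⧸ MulAction.stabilizer (ConjAct G) x) :=
        Nat.card_congr (MulAction.orbitEquivQuotientStabilizer _ _)
    _ = (MulAction.stabilizer (ConjAct G) x).index := rfl

private lemma relindex_dvd_index_of_normal_right {G : Type*} [Group G]
    (H C : Subgroup G) [hC : C.Normal] : H.relIndex C ∣ H.index := by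
  have key : H.relIndex C = H.relIndex (C ⊔ H) := by
    show Nat.card (C ⧸ H.subgroupOf C) =
      Nat.card ((C ⊔ H : Subgroup G) ⧸ H.subgroupOf (C ⊔ H))
    refine Nat.card_congr (Equiv.ofBijective
      (Quotient.map' (fun c => (⟨c.1, Subgroup.mem_sup_left c.2⟩ : (C ⊔ H : Subgroup G)))
        (fun a b hab => by
          rw [QuotientGroup.leftRel_apply, Subgroup.mem_subgroupOf] at hab ⊢
          simpa using hab)) ⟨?_, ?_⟩)
    · intro a b
      refine Quotient.inductionOn₂' a b fun a b hab => ?_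
      rw [Quotient.map'_mk'', Quotient.map'_mk''] at hab
      have h2 := Quotient.exact' hab
      rw [QuotientGroup.leftRel_apply, Subgroup.mem_subgroupOf] at h2
      refine Quotient.sound' ?_
      rw [QuotientGroup.leftRel_apply, Subgroup.mem_subgroupOf]
      simpa using h2
    · refine fun y => Quotient.inductionOn' y fun z => ?_
      obtain ⟨y, hy⟩ := z
      have hy' : y ∈ ((C : Set G) * (H : Set G)) := by
        rw [← Subgroup.normal_mul]; exact hy
      obtain ⟨c, hc, k, hk, rfl⟩ := hy'
      refine ⟨Quotient.mk'' ⟨c, hc⟩, ?_⟩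
      rw [Quotient.map'_mk'']
      refine Quotient.sound' ?_
      rw [QuotientGroup.leftRel_apply, Subgroup.mem_subgroupOf]
      simpa [mul_assoc] using hk
  rw [key]
  exact Subgroup.relIndex_dvd_index_of_le le_sup_right

private lemma centralizer_normal_aux {G : Type*} [Group G] (M : Subgroup G) [hM : M.Normal] :
    (Subgroup.centralizer (M : Set G)).Normal := by
  constructor
  intro c hc g
  rw [Subgroup.mem_centralizer_iff] at hc ⊢
  intro m hm
  have hm' : g⁻¹ * m * g ∈ M := by
    have := hM.conj_mem m hm g⁻¹
    rwa [inv_inv] at this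
  have h2 := hc _ hm'
  calc m * (g * c * g⁻¹) = g * ((g⁻¹ * m * g) * c) * g⁻¹ := by group
    _ = g * (c * (g⁻¹ * m * g)) * g⁻¹ := by rw [h2]
    _ = (g * c * g⁻¹) * m := by group

theorem stmt_2 {G : Type*} [Group G] [Fintype G] (M : Subgroup G) [M.Normal]
    (hZ : Subgroup.center M = ⊥) (C : Subgroup G)
    (hC : C = Subgroup.centralizer (M : Set G))
    (g h : G) (hg : g ∈ C) (hh : h ∈ M) :
    (Nat.card {y : C // IsConj (⟨g, hg⟩ : C) y} ∣
        Nat.card {y : G // IsConj (g * h) y}) ∧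
      (Nat.card {y : M // IsConj (⟨h, hh⟩ : M) y} ∣
        Nat.card {y : G // IsConj (g * h) y}) := by
  haveI hCnormal : C.Normal := hC ▸ centralizer_normal_aux M
  have hgM : ∀ m ∈ M, m * g = g * m := by
    rw [hC] at hg
    exact Subgroup.mem_centralizer_iff.mp hg
  set S := Subgroup.centralizer {g * h} with hS
  rw [card_isConj_eq_index (G := G)]
  constructor
  · rw [card_isConj_eq_index]
    have key : Subgroup.centralizer {(⟨g, hg⟩ : C)} = S.subgroupOf C := by
      ext c
      obtain ⟨c, hcC⟩ := c
      have hch : h * c = c * h := by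
        rw [hC] at hcC
        exact Subgroup.mem_centralizer_iff.mp hcC h hh
      rw [Subgroup.mem_subgroupOf, Subgroup.mem_centralizer_singleton_iff,
        Subgroup.mem_centralizer_singleton_iff, Subtype.ext_iff]
      simp only [Subgroup.coe_mul]
      constructor
      · intro h1
        calc c * (g * h) = (c * g) * h := by rw [mul_assoc]
          _ = (g * c) * h := by rw [h1]
          _ = g * (h * c) := by rw [mul_assoc, hch]
          _ = g * h * c := by rw [mul_assoc]
      · intro h1
        have h2 : (c * g) * h = (g * c) * h := by
          calc (c * g) * h = c * (g * h) := by rw [mul_assoc]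
            _ = g * h * c := h1
            _ = g * (h * c) := by rw [mul_assoc]
            _ = (g * c) * h := by rw [hch, mul_assoc]
        exact mul_right_cancel h2
    rw [key]
    exact relindex_dvd_index_of_normal_right S C
  · rw [card_isConj_eq_index]
    have key : Subgroup.centralizer {(⟨h, hh⟩ : M)} = S.subgroupOf M := by
      ext m
      obtain ⟨m, hmM⟩ := m
      have hgm : m * g = g * m := hgM m hmM
      rw [Subgroup.mem_subgroupOf, Subgroup.mem_centralizer_singleton_iff,
        Subgroup.mem_centralizer_singleton_iff, Subtype.ext_iff]
      simp only [Subgroup.coe_mul]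
      constructor
      · intro h1
        calc m * (g * h) = (m * g) * h := by rw [mul_assoc]
          _ = (g * m) * h := by rw [hgm]
          _ = g * (h * m) := by rw [mul_assoc, h1]
          _ = g * h * m := by rw [mul_assoc]
      · intro h1
        have h2 : g * (m * h) = g * (h * m) := by
          calc g * (m * h) = (m * g) * h := by rw [← mul_assoc, hgm]
            _ = m * (g * h) := by rw [mul_assoc]
            _ = g * h * m := h1
            _ = g * (h * m) := by rw [mul_assoc]
        exact mul_left_cancel h2
    rw [key]
    exact relindex_dvd_index_of_normal_right S M
end

section
/- Let G be a finite group and p a prime. If p does not divide the size of any conjugacy class of G, then G has a central Sylow p-subgroup, i.e., a Sylow p-subgroup of G is contained in the centre of G. -/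
open Subgroup MulAction

private lemma sylow_le_of_not_dvd_index {G : Type*} [Group G] [Fintype G] {p : ℕ}
    [Fact p.Prime] (H : Subgroup G) (hH : ¬ p ∣ H.index) :
    ∃ Q : Sylow p G, (Q : Subgroup G) ≤ H := by
  obtain ⟨R⟩ : Nonempty (Sylow p H) := Sylow.nonempty
  have hpg : IsPGroup p ((R : Subgroup H).map H.subtype) := R.2.map _
  have hidx : ¬ p ∣ ((R : Subgroup H).map H.subtype).index := by
    rw [index_map, H.ker_subtype, sup_bot_eq, H.range_subtype]
    exact fun hd => (Nat.Prime.dvd_mul Fact.out).mp hd |>.elim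
      (R.not_dvd_index' (Subgroup.index_ne_zero_of_finite
        (H := ((R : Subgroup H).subgroupOf (Subgroup.normalizer ((R : Subgroup H) : Set H)))))) hH
  refine ⟨hpg.toSylow hidx, ?_⟩
  have : (hpg.toSylow hidx : Subgroup G) = (R : Subgroup H).map H.subtype := by
    ext x; exact IsPGroup.mem_toSylow hpg hidx
  rw [this]
  exact map_subtype_le _

private lemma sylow_subsingleton_of_centralizing {G : Type*} [Group G] [Fintype G] {p : ℕ}
    [Fact p.Prime]
    (key : ∀ g : G, ∃ Q : Sylow p G, g ∈ Subgroup.centralizer (Q : Set G)) :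
    Subsingleton (Sylow p G) := by
  classical
  have : Fintype (Sylow p G) := Fintype.ofFinite _
  have hfixty : ∀ a : G, Fintype (fixedBy (Sylow p G) a) := fun a => Fintype.ofFinite _
  have hfix : ∀ g : G, ∃ Q : Sylow p G, Q ∈ fixedBy (Sylow p G) g := by
    intro g
    obtain ⟨Q, hQ⟩ := key g
    have hcomm : ∀ q ∈ (Q : Subgroup G), g * q * g⁻¹ = q := fun q hq => by
      rw [mul_inv_eq_iff_eq_mul]
      exact (Subgroup.mem_centralizer_iff.mp hQ q hq).symm
    have hn : g ∈ Subgroup.normalizer ((Q : Subgroup G) : Set G) := by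
      rw [Subgroup.mem_normalizer_iff]
      intro q
      constructor
      · intro hq; rw [hcomm q hq]; exact hq
      · intro hq
        have e := hcomm _ hq
        have e2 : q = g * q * g⁻¹ := by
          calc q = g⁻¹ * (g * q * g⁻¹) * g := by group
            _ = g⁻¹ * (g * (g * q * g⁻¹) * g⁻¹) * g := by rw [e]
            _ = g * q * g⁻¹ := by group
        rw [e2]; exact hq
    exact ⟨Q, Sylow.smul_eq_iff_mem_normalizer.mpr hn⟩
  have hΩ : Fintype (orbitRel.Quotient G (Sylow p G)) := Fintype.ofFinite _
  have hsub : Subsingleton (orbitRel.Quotient G (Sylow p G)) :=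
    (MulAction.pretransitive_iff_subsingleton_quotient G (Sylow p G)).mp inferInstance
  have hΩ1 : Fintype.card (orbitRel.Quotient G (Sylow p G)) = 1 :=
    le_antisymm (Fintype.card_le_one_iff_subsingleton.mpr hsub) Fintype.card_pos
  have hb := MulAction.sum_card_fixedBy_eq_card_orbits_mul_card_group G (Sylow p G)
  rw [hΩ1, one_mul] at hb
  -- lower bound the sum
  have hone : Fintype.card (fixedBy (Sylow p G) (1 : G)) = Fintype.card (Sylow p G) := by
    apply Fintype.card_congr
    apply Equiv.subtypeUnivEquiv
    intro Q
    simp [MulAction.mem_fixedBy]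
  have hsplit : (∑ a : G, Fintype.card (fixedBy (Sylow p G) a)) =
      Fintype.card (fixedBy (Sylow p G) (1 : G)) +
        ∑ a ∈ Finset.univ.erase (1 : G), Fintype.card (fixedBy (Sylow p G) a) :=
    (Finset.add_sum_erase _ _ (Finset.mem_univ 1)).symm
  have hlb : Fintype.card G - 1 ≤
      ∑ a ∈ Finset.univ.erase (1 : G), Fintype.card (fixedBy (Sylow p G) a) := by
    have : ∀ a ∈ Finset.univ.erase (1 : G), 1 ≤ Fintype.card (fixedBy (Sylow p G) a) := by
      intro a _
      obtain ⟨Q, hQ⟩ := hfix a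
      exact Fintype.card_pos_iff.mpr ⟨⟨Q, hQ⟩⟩
    calc Fintype.card G - 1 = ∑ _a ∈ Finset.univ.erase (1 : G), 1 := by
          simp [Finset.card_erase_of_mem]
      _ ≤ _ := Finset.sum_le_sum this
  have hcard : Fintype.card (Sylow p G) ≤ 1 := by
    by_contra hn
    push_neg at hn
    have : Fintype.card G + 1 ≤ Fintype.card G := by
      calc Fintype.card G + 1 = 2 + (Fintype.card G - 1) := by
            have : 1 ≤ Fintype.card G := Fintype.card_pos
            omega
        _ ≤ Fintype.card (Sylow p G) +
            ∑ a ∈ Finset.univ.erase (1 : G), Fintype.card (fixedBy (Sylow p G) a) :=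
            Nat.add_le_add hn hlb
        _ = ∑ a : G, Fintype.card (fixedBy (Sylow p G) a) := by rw [hsplit, hone]
        _ = Fintype.card G := hb
    omega
  exact Fintype.card_le_one_iff_subsingleton.mp hcard

theorem stmt_3 {G : Type*} [Group G] [Fintype G] (p : ℕ) (hp : p.Prime)
    (h : ∀ x : G, ¬ p ∣ Nat.card {y : G // IsConj x y}) :
    ∃ P : Sylow p G, (P : Subgroup G) ≤ Subgroup.center G := by
  have : Fact p.Prime := ⟨hp⟩
  have key : ∀ g : G, ∃ Q : Sylow p G, g ∈ Subgroup.centralizer (Q : Set G) := by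
    intro g
    have hidx : ¬ p ∣ (Subgroup.centralizer {g}).index := by
      have hset : {y : G | IsConj g y} = orbit (ConjAct G) g := by
        ext y; rw [ConjAct.mem_orbit_conjAct, isConj_comm]; rfl
      have e : Nat.card {y : G // IsConj g y} = (Subgroup.centralizer {g}).index :=
        calc Nat.card {y : G // IsConj g y}
            = Nat.card (orbit (ConjAct G) g) := by rw [← hset]; rfl
          _ = Nat.card (ConjAct G ⧸ stabilizer (ConjAct G) g) :=
              Nat.card_congr (orbitEquivQuotientStabilizer (ConjAct G) g)
          _ = (stabilizer (ConjAct G) g).index := rfl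
          _ = (Subgroup.centralizer {g}).index := by
              rw [Subgroup.centralizer_eq_comap_stabilizer]
              exact (index_comap_of_surjective _ ConjAct.toConjAct.surjective).symm
      rw [← e]; exact h g
    obtain ⟨Q, hQ⟩ := sylow_le_of_not_dvd_index _ hidx
    refine ⟨Q, Subgroup.mem_centralizer_iff.mpr fun q hq => ?_⟩
    exact (hQ hq g rfl).symm
  have := sylow_subsingleton_of_centralizing key
  obtain ⟨P⟩ : Nonempty (Sylow p G) := Sylow.nonempty
  refine ⟨P, fun x hx => Subgroup.mem_center_iff.mpr fun g => ?_⟩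
  obtain ⟨Q, hQ⟩ := key g
  rw [Subsingleton.elim P Q] at hx
  exact (Subgroup.mem_centralizer_iff.mp hQ x hx).symm
end

section
/- Let E be a field of characteristic q > n (or characteristic zero), let V = E^n with Alt(n) acting by permuting coordinates, and let D = {(α₁,…,αₙ) ∈ V : α₁ + ⋯ + αₙ = 0} be the deleted permutation module. Suppose d = (α₁,…,α_{n-1}, β) ∈ D is such that α₁,…,α_{n-1} are pairwise distinct nonzero elements of E. Regard D as a module for G = E^× × Alt(n), where E^× acts by scalar multiplication. If (λ, x) ∈ G satisfies λ·(d∘x⁻¹) = d (i.e., (λ,x) fixes d), and t is the order of x, then the cycle type of x (including fixed points) is either (t,…,t) or (t,…,t,1). -/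
theorem stmt_7 {E : Type*} [Field E] (n : ℕ) (hn : 2 ≤ n)
    (hchar : ringChar E = 0 ∨ n < ringChar E)
    (d : Fin n → E) (hsum : ∑ i, d i = 0)
    (hdistinct : ∀ i j : Fin n, (i : ℕ) < n - 1 → (j : ℕ) < n - 1 → i ≠ j → d i ≠ d j)
    (hne : ∀ i : Fin n, (i : ℕ) < n - 1 → d i ≠ 0)
    (x : Equiv.Perm (Fin n)) (hx : x ∈ alternatingGroup (Fin n))
    (lam : Eˣ) (hfix : ∀ i, (lam : E) * d (x⁻¹ i) = d i) :
    (∀ c ∈ x.cycleType, c = orderOf x) ∧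
      ((Finset.univ.filter fun i => x i = i).card ≤ 1 ∨ x = 1) := by
  have hstep : ∀ i, d (x i) = (lam : E) * d i := by
    intro i
    have h := hfix (x i)
    simpa using h.symm
  have hpow : ∀ (k : ℕ) (i : Fin n), d ((x ^ k) i) = (lam : E) ^ k * d i := by
    intro k
    induction k with
    | zero => intro i; simp
    | succ k ih =>
      intro i
      have h1 : (x ^ (k + 1)) i = x ((x ^ k) i) := by
        rw [pow_succ']; rfl
      rw [h1, hstep, ih, pow_succ]
      ring
  have hco : ∀ i : Fin n, (i : ℕ) < n - 1 ∨ (i : ℕ) = n - 1 := by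
    intro i
    have := i.isLt
    omega
  have hzero : ∀ i : Fin n, d i = 0 → (i : ℕ) = n - 1 := by
    intro i h
    rcases hco i with h' | h'
    · exact absurd h (hne i h')
    · exact h'
  have hinj : ∀ i j : Fin n, d i = d j → i ≠ j → (i : ℕ) = n - 1 ∨ (j : ℕ) = n - 1 := by
    intro i j h hne'
    rcases hco i with hi | hi
    · rcases hco j with hj | hj
      · exact absurd h (hdistinct i j hi hj hne')
      · exact Or.inr hj
    · exact Or.inl hi
  by_cases hx1 : x = 1
  · subst hx1
    refine ⟨by simp [Equiv.Perm.cycleType_one], Or.inr rfl⟩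
  -- x ≠ 1 from here on
  have hsign : Equiv.Perm.sign x = 1 := Equiv.Perm.mem_alternatingGroup.mp hx
  have j0lt : n - 1 < n := by omega
  set j0 : Fin n := ⟨n - 1, j0lt⟩ with hj0
  -- λ ≠ 1
  have hlam : (lam : E) ≠ 1 := by
    intro hl
    have hsupp : x.support ⊆ {j0, x⁻¹ j0} := by
      intro i hi
      have hi' : x i ≠ i := Equiv.Perm.mem_support.mp hi
      have hd : d (x i) = d i := by rw [hstep, hl, one_mul]
      rcases hinj (x i) i hd hi' with h | h
      · have : x i = j0 := Fin.ext h
        have : i = x⁻¹ j0 := by rw [← this]; simp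
        simp [this]
      · have : i = j0 := Fin.ext h
        simp [this]
    have hc2 : x.support.card ≤ 2 := le_trans (Finset.card_le_card hsupp)
      (le_trans (Finset.card_insert_le _ _) (by simp))
    have hc2' : 1 < x.support.card := Equiv.Perm.one_lt_card_support_of_ne_one hx1
    have hswap : x.IsSwap := Equiv.Perm.card_support_eq_two.mp (by omega)
    have := hswap.sign_eq
    rw [hsign] at this
    exact absurd this (by decide)
  have hmoved : ∀ i : Fin n, x i ≠ i → d i ≠ 0 := by
    intro i hi h0
    have h1 : d (x i) = 0 := by rw [hstep, h0, mul_zero]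
    have e1 := hzero i h0
    have e2 := hzero (x i) h1
    exact hi (Fin.ext (by omega))
  obtain ⟨i0, hi0⟩ : ∃ i, x i ≠ i := by
    by_contra h
    push_neg at h
    exact hx1 (Equiv.ext fun i => (h i))
  have hd0 : d i0 ≠ 0 := hmoved i0 hi0
  have htpos : orderOf x ≠ 0 := (orderOf_pos x).ne'
  have hlt : (lam : E) ^ orderOf x = 1 := by
    have h1 : (x ^ orderOf x) i0 = i0 := by rw [pow_orderOf_eq_one]; rfl
    have h2 := hpow (orderOf x) i0
    rw [h1] at h2
    have := mul_right_cancel₀ hd0 (h2.symm.trans (one_mul (d i0)).symm)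
    exact this
  set m : ℕ := orderOf ((lam : E)) with hm
  have hmdvd : m ∣ orderOf x := orderOf_dvd_of_pow_eq_one hlt
  have hm0 : m ≠ 0 := by
    intro h
    rw [h] at hmdvd
    exact htpos (Nat.eq_zero_of_zero_dvd hmdvd)
  have hm1 : m ≠ 1 := fun h => hlam (orderOf_eq_one_iff.mp h)
  have hlm : (lam : E) ^ m = 1 := pow_orderOf_eq_one _
  -- key: x ^ m = 1
  have hxm : x ^ m = 1 := by
    refine Equiv.ext fun i => ?_
    show (x ^ m) i = i
    by_cases hi : x i = i
    · exact Equiv.Perm.pow_apply_eq_self_of_apply_eq_self hi m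
    · by_contra hne2
      have hdi : d i ≠ 0 := hmoved i hi
      have e1 : d ((x ^ m) i) = d i := by rw [hpow, hlm, one_mul]
      have hmoved' : x (x i) ≠ x i := fun h => hi (x.injective h)
      have hcomm : (x ^ m) (x i) = x ((x ^ m) i) := by
        have h1 : x ^ m * x = x * x ^ m := (pow_succ x m).symm.trans (pow_succ' x m)
        calc (x ^ m) (x i) = (x ^ m * x) i := rfl
          _ = (x * x ^ m) i := by rw [h1]
          _ = x ((x ^ m) i) := rfl
      have hne3 : (x ^ m) (x i) ≠ x i := by
        rw [hcomm]
        intro h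
        exact hne2 (x.injective h)
      have e2 : d ((x ^ m) (x i)) = d (x i) := by rw [hpow, hlm, one_mul]
      have hlam1 : (lam : E) * d i ≠ d i := by
        intro h
        exact hlam (mul_right_cancel₀ hdi (h.trans (one_mul (d i)).symm))
      rcases hinj _ _ e1 hne2 with hA | hA <;>
        rcases hinj _ _ e2 hne3 with hB | hB
      · -- x^m i = j0 and (x^m)(x i) = j0
        have : (x ^ m) i = (x ^ m) (x i) := Fin.ext (by omega)
        exact hi ((x ^ m).injective this).symm
      · -- x^m i = j0 and x i = j0
        have hEq : (x ^ m) i = x i := Fin.ext (by omega)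
        have : d ((x ^ m) i) = d (x i) := by rw [hEq]
        rw [e1, hstep] at this
        exact hlam1 this.symm
      · -- i = j0 and (x^m)(x i) = j0
        have hEq : (x ^ m) (x i) = i := Fin.ext (by omega)
        have : d ((x ^ m) (x i)) = d i := by rw [hEq]
        rw [e2, hstep] at this
        exact hlam1 this
      · -- i = j0 and x i = j0
        exact hi (Fin.ext (by omega))
  have hxdvd : orderOf x ∣ m := orderOf_dvd_of_pow_eq_one hxm
  have htm : orderOf x = m := Nat.dvd_antisymm hxdvd hmdvd
  constructor
  · intro c hc
    have hcdvd : c ∣ orderOf x := by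
      rw [← Equiv.Perm.lcm_cycleType x]
      exact Multiset.dvd_lcm hc
    rw [Equiv.Perm.cycleType_def] at hc
    obtain ⟨f, hf, hfc⟩ := Multiset.mem_map.mp hc
    simp only [Function.comp] at hfc
    have hf' : f ∈ x.cycleFactorsFinset := hf
    obtain ⟨hcyc, hagree⟩ := Equiv.Perm.mem_cycleFactorsFinset_iff.mp hf'
    obtain ⟨i, hi'⟩ : ∃ i, i ∈ f.support := by
      have : f.support.Nonempty := Finset.card_pos.mp (by
        have : 2 ≤ f.support.card := by
          rw [hfc]
          exact Equiv.Perm.two_le_of_mem_cycleType (σ := x) (by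
            rw [Equiv.Perm.cycleType_def]; exact hc)
        omega)
      exact this
    have hfi : f = x.cycleOf i := Equiv.Perm.cycle_is_cycleOf hi' hf'
    have hxi : x i ≠ i := by
      have h1 : f i ≠ i := Equiv.Perm.mem_support.mp hi'
      rw [hagree i hi'] at h1
      exact h1
    have hfc' : f ^ c = 1 := by
      have h3 := hcyc.orderOf
      rw [hfc] at h3
      rw [← h3]
      exact pow_orderOf_eq_one f
    have hxc : (x ^ c) i = i := by
      have := Equiv.Perm.cycleOf_pow_apply_self x i c
      rw [← hfi, hfc'] at this
      exact this.symm
    have hlc : (lam : E) ^ c = 1 := by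
      have h2 := hpow c i
      rw [hxc] at h2
      exact mul_right_cancel₀ (hmoved i hxi) (h2.symm.trans (one_mul (d i)).symm)
    have hmc : m ∣ c := orderOf_dvd_of_pow_eq_one hlc
    rw [htm] at hcdvd ⊢
    exact Nat.dvd_antisymm hcdvd hmc
  · left
    have hsub : (Finset.univ.filter fun i => x i = i) ⊆ {j0} := by
      intro i hi
      have hi' : x i = i := (Finset.mem_filter.mp hi).2
      have h1 : d i = (lam : E) * d i := by
        conv_lhs => rw [← hi', hstep]
      have hdi : d i = 0 := by
        by_contra h0
        exact hlam (mul_right_cancel₀ h0 (h1.symm.trans (one_mul (d i)).symm))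
      have h4 : ↑i = n - 1 := hzero i hdi
      have hij : i = j0 := Fin.ext h4
      simp [hij]
    exact le_trans (Finset.card_le_card hsub) (by simp)
end

section
/- Let G be a finite group acting faithfully on a finite abelian group A with gcd(|G|, |A|) = 1, and suppose G is abelian. Then G has a regular orbit on A, i.e., there exists a ∈ A with C_G(a) = 1. -/
open Finset

private def restrictAut {G A : Type*} [Group G] [Group A] (φ : G →* MulAut A)
    (N : Subgroup A) (h : ∀ g : G, ∀ x : A, x ∈ N → φ g x ∈ N) : G →* MulAut ↥N where
  toFun g :=
    { toFun := fun x => ⟨φ g x, h g x x.2⟩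
      invFun := fun x => ⟨φ g⁻¹ x, h g⁻¹ x x.2⟩
      left_inv := fun x => Subtype.ext (by
        show φ g⁻¹ (φ g x.1) = x.1
        rw [← MulAut.mul_apply, ← map_mul, inv_mul_cancel, map_one, MulAut.one_apply])
      right_inv := fun x => Subtype.ext (by
        show φ g (φ g⁻¹ x.1) = x.1
        rw [← MulAut.mul_apply, ← map_mul, mul_inv_cancel, map_one, MulAut.one_apply])
      map_mul' := fun x y => Subtype.ext (map_mul (φ g) x.1 y.1) }
  map_one' := by
    ext x
    show φ 1 x.1 = x.1
    simp
  map_mul' g g' := by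
    ext x
    show φ (g * g') x.1 = φ g (φ g' x.1)
    rw [map_mul, MulAut.mul_apply]

private theorem restrictAut_apply {G A : Type*} [Group G] [Group A] (φ : G →* MulAut A)
    (N : Subgroup A) (h : ∀ g : G, ∀ x : A, x ∈ N → φ g x ∈ N) (g : G) (x : ↥N) :
    ((restrictAut φ N h g x : ↥N) : A) = φ g x := rfl

private theorem aux (G : Type*) [CommGroup G] [Fintype G] :
    ∀ (n : ℕ) (A : Type*) [CommGroup A] [Fintype A], Fintype.card A ≤ n →
    ∀ (φ : G →* MulAut A), Nat.Coprime (Fintype.card G) (Fintype.card A) →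
    ∃ a : A, ∀ g : G, φ g a = a → ∀ x : A, φ g x = x := by
  intro n
  induction n with
  | zero =>
    intro A _ _ hcard
    exact absurd hcard (by simpa using Fintype.card_pos (α := A))
  | succ n ih =>
    intro A _ _ hcard φ hcop
    classical
    -- choose a with minimal stabilizer size
    obtain ⟨a, -, ha⟩ := Finset.exists_min_image (univ : Finset A)
      (fun b => (univ.filter fun g : G => φ g b = b).card) ⟨1, mem_univ 1⟩
    by_cases hreg : ∀ g : G, φ g a = a → ∀ x : A, φ g x = x
    · exact ⟨a, hreg⟩
    push_neg at hreg
    obtain ⟨s, hsa, x0, hx0⟩ := hreg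
    -- the homomorphism f x = (φ s x) * x⁻¹
    set σ := φ s with hσ
    have hf_mul : ∀ x y : A, φ s (x * y) * (x * y)⁻¹ = (φ s x * x⁻¹) * (φ s y * y⁻¹) := by
      intro x y
      rw [map_mul, mul_inv_rev]
      simp [mul_comm, mul_assoc, mul_left_comm]
    let f : A →* A :=
      { toFun := fun x => φ s x * x⁻¹
        map_one' := by simp
        map_mul' := hf_mul }
    have hf_apply : ∀ x : A, f x = φ s x * x⁻¹ := fun _ => rfl
    have hcomm : ∀ (h : G) (x : A), f (φ h x) = φ h (f x) := by
      intro h x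
      have hsw : φ s (φ h x) = φ h (φ s x) := by
        rw [← MulAut.mul_apply, ← map_mul, mul_comm s h, map_mul, MulAut.mul_apply]
      rw [hf_apply, hf_apply, hsw, map_mul, map_inv]
    set nG := Fintype.card G with hnG
    have hstep : ∀ (i : ℕ) (x : A), φ (s ^ (i + 1)) x = φ s (φ (s ^ i) x) := by
      intro i x
      rw [pow_succ', map_mul, MulAut.mul_apply]
    have hzero : ∀ x : A, φ (s ^ 0) x = x := by
      intro x; rw [pow_zero, map_one, MulAut.one_apply]
    have hσn : ∀ x : A, φ (s ^ nG) x = x := by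
      intro x; rw [hnG, pow_card_eq_one, map_one, MulAut.one_apply]
    have hpow_one : ∀ y : A, y ^ nG = 1 → y = 1 := by
      intro y hy
      have h1 : orderOf y ∣ nG := orderOf_dvd_of_pow_eq_one hy
      have h2 : orderOf y ∣ Fintype.card A := orderOf_dvd_card
      have h3 := Nat.dvd_gcd h1 h2
      rw [Nat.Coprime.gcd_eq_one hcop] at h3
      exact orderOf_eq_one_iff.mp (Nat.dvd_one.mp h3)
    let Nm : A → A := fun x => ∏ i ∈ Finset.range nG, φ (s ^ i) x
    have hNm_apply : ∀ x : A, Nm x = ∏ i ∈ Finset.range nG, φ (s ^ i) x := fun _ => rfl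
    have hNm_ker : ∀ x : A, Nm x ∈ f.ker := by
      intro x
      rw [MonoidHom.mem_ker, hf_apply]
      have : φ s (Nm x) * (Nm x)⁻¹
          = ∏ i ∈ Finset.range nG, (φ (s ^ (i + 1)) x / φ (s ^ i) x) := by
        rw [hNm_apply, map_prod, ← Finset.prod_inv_distrib, ← Finset.prod_mul_distrib]
        refine Finset.prod_congr rfl fun i _ => ?_
        rw [div_eq_mul_inv, hstep]
      rw [this, Finset.prod_range_div (fun i => φ (s ^ i) x) nG, hσn, hzero, div_self']
    have hmem_range : ∀ (i : ℕ) (x : A), φ (s ^ i) x * x⁻¹ ∈ f.range := by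
      intro i x
      induction i with
      | zero => rw [hzero, mul_inv_cancel]; exact Subgroup.one_mem _
      | succ i ihh =>
        have : φ (s ^ (i + 1)) x * x⁻¹ = f (φ (s ^ i) x) * (φ (s ^ i) x * x⁻¹) := by
          rw [hf_apply, hstep]
          simp [mul_assoc]
        rw [this]
        exact mul_mem ⟨φ (s ^ i) x, rfl⟩ ihh
    have hNm_range : ∀ x : A, Nm x * (x ^ nG)⁻¹ ∈ f.range := by
      intro x
      have : Nm x * (x ^ nG)⁻¹ = ∏ i ∈ Finset.range nG, (φ (s ^ i) x * x⁻¹) := by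
        rw [Finset.prod_mul_distrib, Finset.prod_const, Finset.card_range, hNm_apply,
          inv_pow]
      rw [this]
      exact Subgroup.prod_mem _ fun i _ => hmem_range i x
    have hker_fix : ∀ y : A, y ∈ f.ker → ∀ i : ℕ, φ (s ^ i) y = y := by
      intro y hy i
      rw [MonoidHom.mem_ker, hf_apply, mul_inv_eq_one] at hy
      induction i with
      | zero => exact hzero y
      | succ i ihh => rw [hstep, ihh, hy]
    have hCD : ∀ y : A, y ∈ f.ker → y ∈ f.range → y = 1 := by
      intro y hk hr
      obtain ⟨w, hw⟩ := hr
      apply hpow_one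
      have h1 : Nm y = y ^ nG := by
        rw [hNm_apply]
        have : ∀ i ∈ Finset.range nG, φ (s ^ i) y = y := fun i _ => hker_fix y hk i
        rw [Finset.prod_congr rfl this, Finset.prod_const, Finset.card_range]
      have h2 : Nm y = 1 := by
        rw [← hw, hNm_apply]
        have : ∀ i ∈ Finset.range nG, φ (s ^ i) (f w)
            = φ (s ^ (i + 1)) w / φ (s ^ i) w := by
          intro i _
          rw [← hcomm, hf_apply, ← hstep, div_eq_mul_inv]
        rw [Finset.prod_congr rfl this, Finset.prod_range_div (fun i => φ (s ^ i) w) nG,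
          hσn, hzero, div_self']
      rw [← h1, h2]
    -- a nontrivial fixed point of s exists
    have hc0 : ∃ c0 : A, c0 ≠ 1 ∧ φ s c0 = c0 := by
      by_cases haone : a = 1
      · exfalso
        have hfull : ∀ b : A, ∀ g : G, φ g b = b := by
          intro b g
          have h1 := ha b (mem_univ b)
          have h2 : (univ.filter fun g : G => φ g a = a) = univ := by
            refine Finset.eq_univ_iff_forall.mpr fun g => ?_
            simp [haone]
          rw [h2, Finset.card_univ] at h1
          have h3 : (univ.filter fun g : G => φ g b = b) = univ :=
            Finset.eq_univ_of_card _ (le_antisymm (Finset.card_le_univ _) h1)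
          have := Finset.eq_univ_iff_forall.mp h3 g
          simpa using this
        exact hx0 (hfull x0 s)
      · exact ⟨a, haone, hsa⟩
    obtain ⟨c0, hc0ne, hc0fix⟩ := hc0
    have hc0ker : c0 ∈ f.ker := by
      rw [MonoidHom.mem_ker, hf_apply, hc0fix, mul_inv_cancel]
    have hx0nker : x0 ∉ f.ker := by
      intro h
      rw [MonoidHom.mem_ker, hf_apply, mul_inv_eq_one] at h
      exact hx0 h
    have hc0nrange : c0 ∉ f.range := fun h => hc0ne (hCD c0 hc0ker h)
    have hcardC : Fintype.card f.ker < Fintype.card A := by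
      have := Finite.card_subtype_lt (p := fun x => x ∈ f.ker) hx0nker
      simpa [Nat.card_eq_fintype_card] using this
    have hcardD : Fintype.card f.range < Fintype.card A := by
      have := Finite.card_subtype_lt (p := fun x => x ∈ f.range) hc0nrange
      simpa [Nat.card_eq_fintype_card] using this
    have hcopC : Nat.Coprime (Fintype.card G) (Fintype.card f.ker) := by
      refine Nat.Coprime.coprime_dvd_right ?_ hcop
      have := Subgroup.card_subgroup_dvd_card f.ker
      simpa [Nat.card_eq_fintype_card] using this
    have hcopD : Nat.Coprime (Fintype.card G) (Fintype.card f.range) := by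
      refine Nat.Coprime.coprime_dvd_right ?_ hcop
      have := Subgroup.card_subgroup_dvd_card f.range
      simpa [Nat.card_eq_fintype_card] using this
    have hCst : ∀ g : G, ∀ x : A, x ∈ f.ker → φ g x ∈ f.ker := by
      intro g x hx
      rw [MonoidHom.mem_ker] at hx ⊢
      rw [hcomm, hx, map_one]
    have hDst : ∀ g : G, ∀ x : A, x ∈ f.range → φ g x ∈ f.range := by
      rintro g x ⟨w, rfl⟩
      exact ⟨φ g w, hcomm g w⟩
    obtain ⟨c, hc⟩ := ih ↥f.ker (Nat.lt_succ_iff.mp (lt_of_lt_of_le hcardC hcard))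
      (restrictAut φ f.ker hCst) hcopC
    obtain ⟨d, hd⟩ := ih ↥f.range (Nat.lt_succ_iff.mp (lt_of_lt_of_le hcardD hcard))
      (restrictAut φ f.range hDst) hcopD
    refine ⟨(c : A) * (d : A), fun g hg => ?_⟩
    rw [map_mul] at hg
    have huv : (φ g c.1 * c.1⁻¹) * (φ g d.1 * d.1⁻¹) = 1 := by
      have : (φ g c.1 * c.1⁻¹) * (φ g d.1 * d.1⁻¹)
          = (φ g c.1 * φ g d.1) * (c.1 * d.1)⁻¹ := by
        rw [mul_inv_rev]
        simp [mul_comm, mul_assoc, mul_left_comm]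
      rw [this, hg, mul_inv_cancel]
    have huC : φ g c.1 * c.1⁻¹ ∈ f.ker := mul_mem (hCst g c.1 c.2) (inv_mem c.2)
    have huD : φ g c.1 * c.1⁻¹ ∈ f.range := by
      have : φ g c.1 * c.1⁻¹ = (φ g d.1 * d.1⁻¹)⁻¹ := by
        rw [eq_inv_iff_mul_eq_one]; exact huv
      rw [this]
      exact inv_mem (mul_mem (hDst g d.1 d.2) (inv_mem d.2))
    have hu1 : φ g c.1 * c.1⁻¹ = 1 := hCD _ huC huD
    have hgc : φ g c.1 = c.1 := by rwa [mul_inv_eq_one] at hu1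
    have hgd : φ g d.1 = d.1 := by
      have hv1 : φ g d.1 * d.1⁻¹ = 1 := by
        rw [hu1, one_mul] at huv; exact huv
      rwa [mul_inv_eq_one] at hv1
    have hfixC : ∀ x : A, x ∈ f.ker → φ g x = x := by
      intro x hx
      have := hc g (Subtype.ext hgc) ⟨x, hx⟩
      exact congrArg Subtype.val this
    have hfixD : ∀ x : A, x ∈ f.range → φ g x = x := by
      intro x hx
      have := hd g (Subtype.ext hgd) ⟨x, hx⟩
      exact congrArg Subtype.val this
    intro x
    have hpowfix : φ g (x ^ nG) = x ^ nG := by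
      have hdecomp : x ^ nG = Nm x * (Nm x * (x ^ nG)⁻¹)⁻¹ := by
        simp [mul_comm, mul_assoc, mul_left_comm]
      rw [hdecomp, map_mul, map_inv, hfixC _ (hNm_ker x), hfixD _ (hNm_range x)]
    have : (φ g x * x⁻¹) ^ nG = 1 := by
      rw [mul_pow, inv_pow, ← map_pow, hpowfix, mul_inv_cancel]
    have := hpow_one _ this
    rwa [mul_inv_eq_one] at this

theorem stmt_9 {G A : Type*} [CommGroup G] [Fintype G] [CommGroup A] [Fintype A]
    [MulDistribMulAction G A] [FaithfulSMul G A]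
    (hcop : Nat.Coprime (Fintype.card G) (Fintype.card A)) :
    ∃ a : A, ∀ g : G, g • a = a → g = 1 := by
  obtain ⟨a, ha⟩ := aux G (Fintype.card A) A le_rfl (MulDistribMulAction.toMulAut G A) hcop
  refine ⟨a, fun g hg => ?_⟩
  have h1 : ∀ x : A, g • x = x := ha g hg
  exact FaithfulSMul.eq_of_smul_eq_smul (fun x => by rw [h1 x, one_smul])
end

section
/- Let G be a finite group, A a minimal normal subgroup of G which is an abelian q-group for a prime q, and suppose A is a Sylow q-subgroup of G. Then for every x ∈ G \ C_G(A), the prime q divides the size of the conjugacy class of x in G. -/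
/-- If `P` is a `q`-group and `H ≤ P` with `q` not dividing `H.index`, then `P ≤ H`. -/
lemma aux_le_of_pgroup {G : Type*} [Group G] [Fintype G] {q : ℕ} (hq : q.Prime)
    {H P : Subgroup G} (hP : IsPGroup q P) (hle : H ≤ P) (h : ¬ q ∣ H.index) : P ≤ H := by
  haveI : Fact q.Prime := ⟨hq⟩
  obtain ⟨n, hn⟩ := IsPGroup.iff_card.mp hP
  have h1 : H.relIndex P ∣ H.index := Subgroup.relIndex_dvd_index_of_le hle
  have h2 : H.relIndex P ∣ q ^ n := by
    rw [← hn]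
    exact Subgroup.index_dvd_card (H := H.subgroupOf P)
  have h3 : H.relIndex P = 1 := by
    rcases (Nat.dvd_prime_pow hq).mp h2 with ⟨k, hk, hkeq⟩
    rcases Nat.eq_zero_or_pos k with rfl | hkpos
    · simpa using hkeq
    · exact absurd (dvd_trans (dvd_trans (dvd_pow_self q hkpos.ne') (hkeq ▸ dvd_refl _)) h1) h
  exact (Subgroup.relIndex_eq_one).mp h3

theorem stmt_13 {G : Type*} [Group G] [Fintype G] (q : ℕ) (hq : q.Prime)
    (A : Subgroup G) [A.Normal] (hA : A ≠ ⊥) (hcomm : IsMulCommutative A)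
    (hmin : ∀ K : Subgroup G, K.Normal → K ≤ A → K = ⊥ ∨ K = A)
    (hp : IsPGroup q A) (hsyl : ¬ q ∣ A.index)
    (x : G) (hx : x ∉ Subgroup.centralizer (A : Set G)) :
    q ∣ (Subgroup.centralizer ({x} : Set G)).index := by
  haveI : Fact q.Prime := ⟨hq⟩
  by_contra h
  set C := Subgroup.centralizer ({x} : Set G) with hC
  -- A is a Sylow q-subgroup of G
  obtain ⟨PA, hPA⟩ := hp.exists_le_sylow
  have hAeq : A = PA := le_antisymm hPA (aux_le_of_pgroup hq PA.isPGroup' hPA hsyl)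
  -- take a Sylow q-subgroup of C and map it into G
  obtain ⟨PC⟩ := (inferInstance : Nonempty (Sylow q C))
  set Q : Subgroup G := PC.toSubgroup.map C.subtype with hQ
  have hQle : Q ≤ C := by
    rintro g ⟨⟨g', hg'⟩, _, rfl⟩
    exact hg'
  have hQp : IsPGroup q Q := PC.isPGroup'.map C.subtype
  -- q does not divide Q.index
  have hrel : Q.relIndex C = PC.toSubgroup.index := by
    rw [Subgroup.relIndex, hQ, Subgroup.subgroupOf,
      Subgroup.comap_map_eq_self_of_injective C.subtype_injective]
  have hQind : ¬ q ∣ Q.index := by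
    rw [← Subgroup.relIndex_mul_index hQle, hrel]
    exact hq.not_dvd_mul PC.not_dvd_index h
  -- Q is contained in a Sylow subgroup, which must be A by normal uniqueness
  obtain ⟨R, hR⟩ := hQp.exists_le_sylow
  haveI := Sylow.unique_of_normal PA (hAeq ▸ ‹A.Normal›)
  have hRA : R = PA := Subsingleton.elim R PA
  have hQA : Q ≤ A := hAeq ▸ hRA ▸ hR
  -- then A ≤ Q ≤ C, so x centralizes A
  have hAQ : A ≤ Q := hAeq ▸ hRA ▸ aux_le_of_pgroup hq R.isPGroup' hR hQind
  apply hx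
  intro a ha
  have hax : a ∈ C := hQle (hAQ ha)
  have := hax x (Set.mem_singleton x)
  exact this.symm
end

section
/- Let G be a finite group, Q a Sylow q-subgroup of G, and A an abelian normal q'-subgroup of G (q does not divide |A|). Then A = [A,Q] × C_A(Q), and if moreover QA is normal in G so that every G-conjugate of Q has the form Q^a for some a ∈ A, then [A,Q] is a normal subgroup of G. -/
open Subgroup
open scoped IsMulCommutative
open scoped commutatorElement

section Tau
variable {G : Type*} [Group G] (A : Subgroup G) [A.Normal] [IsMulCommutative A]
  (Q : Subgroup G) [Fintype Q]

/-- The "averaging" homomorphism `a ↦ ∏_{x ∈ Q} x a x⁻¹` on an abelian normal subgroup. -/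
noncomputable def tauHom : A →* A :=
  ∏ x : Q, (MulAut.conjNormal (x : G)).toMonoidHom

variable {A Q}

theorem tauHom_apply (a : A) :
    tauHom A Q a = ∏ x : Q, MulAut.conjNormal (x : G) a := by
  simp [tauHom]

theorem tauHom_conj (y : Q) (a : A) :
    tauHom A Q (MulAut.conjNormal (y : G) a) = tauHom A Q a := by
  rw [tauHom_apply]
  have h1 : ∀ x : Q, MulAut.conjNormal (x : G) (MulAut.conjNormal (y : G) a)
      = MulAut.conjNormal ((x * y : Q) : G) a := by
    intro x
    rw [Subgroup.coe_mul, map_mul]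
    rfl
  simp_rw [h1]
  rw [tauHom_apply]
  exact Fintype.prod_equiv (Equiv.mulRight y)
    (fun x => MulAut.conjNormal ((x * y : Q) : G) a)
    (fun x => MulAut.conjNormal (x : G) a) (fun x => rfl)

theorem conjNormal_tauHom (y : Q) (a : A) :
    MulAut.conjNormal (y : G) (tauHom A Q a) = tauHom A Q a := by
  rw [tauHom_apply, map_prod]
  have h1 : ∀ x : Q, MulAut.conjNormal (y : G) (MulAut.conjNormal (x : G) a)
      = MulAut.conjNormal ((y * x : Q) : G) a := by
    intro x
    rw [Subgroup.coe_mul, map_mul]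
    rfl
  simp_rw [h1]
  exact Fintype.prod_equiv (Equiv.mulLeft y)
    (fun x => MulAut.conjNormal ((y * x : Q) : G) a)
    (fun x => MulAut.conjNormal (x : G) a) (fun x => rfl)

theorem tauHom_exists (a : A) :
    ∃ c : A, (c : G) ∈ ⁅A, Q⁆ ∧ tauHom A Q a = c * a ^ Fintype.card Q := by
  refine ⟨∏ x : Q, (MulAut.conjNormal (x : G) a * a⁻¹), ?_, ?_⟩
  · rw [← Subgroup.mem_subgroupOf (H := ⁅A, Q⁆) (K := A)]
    refine Subgroup.prod_mem _ fun x _ => ?_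
    rw [Subgroup.mem_subgroupOf]
    have : ((MulAut.conjNormal (x : G) a * a⁻¹ : A) : G) = ⁅(x : G), (a : G)⁆ := by
      push_cast [MulAut.conjNormal_apply]
      group
    rw [this]
    exact Subgroup.commutator_comm (H₁ := Q) (H₂ := A) ▸
      commutator_mem_commutator x.2 a.2
  · rw [tauHom_apply, Finset.prod_mul_distrib, Finset.prod_const, inv_pow,
      Finset.card_univ, mul_assoc, inv_mul_cancel, mul_one]

theorem commutator_le_tauHom_ker :
    ⁅A, Q⁆ ≤ (tauHom A Q).ker.map A.subtype := by
  rw [Subgroup.commutator_le]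
  intro g hg h hh
  refine ⟨⟨g, hg⟩ * MulAut.conjNormal ((⟨h, hh⟩ : Q) : G) (⟨g, hg⟩ : A)⁻¹, ?_, ?_⟩
  · rw [SetLike.mem_coe, MonoidHom.mem_ker, map_mul, tauHom_conj (y := (⟨h, hh⟩ : Q)),
      map_inv, mul_inv_cancel]
  · show ((⟨g, hg⟩ * MulAut.conjNormal ((⟨h, hh⟩ : Q) : G) (⟨g, hg⟩ : A)⁻¹ : A) : G) = _
    push_cast [MulAut.conjNormal_apply]
    rw [commutatorElement_def]
    group

end Tau

/-- If conjugation by `g` and by `g⁻¹` both preserve `H`, then `H.map (conj g) = H`. -/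
theorem map_conj_eq_self {G : Type*} [Group G] {H : Subgroup G} {g : G}
    (h₁ : ∀ x ∈ H, g * x * g⁻¹ ∈ H) (h₂ : ∀ x ∈ H, g⁻¹ * x * g ∈ H) :
    H.map (MulAut.conj g).toMonoidHom = H := by
  ext y
  simp only [Subgroup.mem_map, MulEquiv.coe_toMonoidHom, MulAut.conj_apply]
  constructor
  · rintro ⟨x, hx, rfl⟩; exact h₁ x hx
  · intro hy; exact ⟨g⁻¹ * y * g, h₂ y hy, by group⟩

theorem stmt_14 {G : Type*} [Group G] [Fintype G] (q : ℕ) (hq : q.Prime)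
    (Q : Sylow q G) (A : Subgroup G) [A.Normal] (hcomm : IsMulCommutative A)
    (hq' : ¬ q ∣ Nat.card A) :
    (⁅A, (Q : Subgroup G)⁆ ⊔ (A ⊓ Subgroup.centralizer (Q : Set G)) = A ∧
      ⁅A, (Q : Subgroup G)⁆ ⊓ (A ⊓ Subgroup.centralizer (Q : Set G)) = ⊥) ∧
    (((Q : Subgroup G) ⊔ A).Normal → ⁅A, (Q : Subgroup G)⁆.Normal) := by
  haveI := Fact.mk hq
  haveI := hcomm
  haveI : Fintype (Q : Subgroup G) := Fintype.ofFinite _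
  set K := ⁅A, (Q : Subgroup G)⁆ with hKdef
  have hKA : K ≤ A := Subgroup.commutator_le_left A Q
  -- the cardinality of Q is a power of q, coprime to |A|
  obtain ⟨k, hk⟩ := IsPGroup.iff_card.mp Q.2
  have hcop : (Nat.card A).Coprime (Fintype.card (Q : Subgroup G)) := by
    rw [← Nat.card_eq_fintype_card, hk]
    exact Nat.Coprime.pow_right k ((hq.coprime_iff_not_dvd.mpr hq').symm)
  -- tauHom's image lies in the centralizer of Q
  have htauC : ∀ a : A, ((tauHom A (Q : Subgroup G) a : A) : G) ∈
      Subgroup.centralizer (Q : Set G) := by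
    intro a
    rw [Subgroup.mem_centralizer_iff]
    intro y hy
    have h1 := conjNormal_tauHom (A := A) (⟨y, hy⟩ : (Q : Subgroup G)) a
    have h2 := congrArg (fun z : A => (z : G)) h1
    simp only [MulAut.conjNormal_apply] at h2
    calc y * ((tauHom A (Q : Subgroup G) a : A) : G)
        = y * (tauHom A (Q : Subgroup G) a : G) * y⁻¹ * y := by group
      _ = (tauHom A (Q : Subgroup G) a : G) * y := by rw [h2]
  constructor
  · constructor
    · refine le_antisymm (sup_le hKA inf_le_left) ?_
      intro a ha
      obtain ⟨b, hb⟩ := (powCoprime hcop).surjective (⟨a, ha⟩ : A)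
      have hb' : b ^ Fintype.card (Q : Subgroup G) = (⟨a, ha⟩ : A) := hb
      obtain ⟨c, hcK, hc⟩ := tauHom_exists (Q := (Q : Subgroup G)) b
      have key : a = ((c : G))⁻¹ * ((tauHom A (Q : Subgroup G) b : A) : G) := by
        have : (⟨a, ha⟩ : A) = c⁻¹ * tauHom A (Q : Subgroup G) b := by
          rw [hc, ← hb']
          group
        have := congrArg (fun z : A => (z : G)) this
        push_cast at this
        exact this
      rw [key]
      exact mul_mem (inv_mem (le_sup_left (α := Subgroup G) hcK))
        (le_sup_right (α := Subgroup G) ⟨(tauHom A (Q : Subgroup G) b).2, htauC b⟩)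
    · rw [eq_bot_iff]
      rintro a ⟨haK, haA, haC⟩
      have ha' : (⟨a, haA⟩ : A) ∈ (tauHom A (Q : Subgroup G)).ker := by
        obtain ⟨b, hbker, hba⟩ := commutator_le_tauHom_ker haK
        have : b = (⟨a, haA⟩ : A) := Subtype.ext hba
        rwa [this] at hbker
      have hfix : ∀ x : (Q : Subgroup G),
          MulAut.conjNormal (x : G) (⟨a, haA⟩ : A) = (⟨a, haA⟩ : A) := by
        intro x
        have hcz := (Subgroup.mem_centralizer_iff.mp haC) (x : G) x.2
        ext
        rw [MulAut.conjNormal_apply]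
        show (x : G) * a * (x : G)⁻¹ = a
        rw [hcz]
        group
      have hpow : (⟨a, haA⟩ : A) ^ Fintype.card (Q : Subgroup G) = 1 := by
        have h1 : tauHom A (Q : Subgroup G) (⟨a, haA⟩ : A)
            = (⟨a, haA⟩ : A) ^ Fintype.card (Q : Subgroup G) := by
          rw [tauHom_apply]
          simp_rw [hfix]
          rw [Finset.prod_const, Finset.card_univ]
        rw [← h1]
        exact ha'
      have hord : orderOf (⟨a, haA⟩ : A) = 1 := by
        have d1 : orderOf (⟨a, haA⟩ : A) ∣ Fintype.card (Q : Subgroup G) :=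
          orderOf_dvd_of_pow_eq_one hpow
        have d2 : orderOf (⟨a, haA⟩ : A) ∣ Nat.card A := orderOf_dvd_natCard _
        exact Nat.eq_one_of_dvd_coprimes hcop d2 d1
      have : (⟨a, haA⟩ : A) = 1 := orderOf_eq_one_iff.mp hord
      have := congrArg (fun z : A => (z : G)) this
      simpa using this
  · intro hN
    -- N := Q ⊔ A is normal; show K is normal in G
    set N := (Q : Subgroup G) ⊔ A with hNdef
    have hQN : (Q : Subgroup G) ≤ N := le_sup_left
    have hAN : A ≤ N := le_sup_right
    -- everything in N normalizes K
    have hmapA : ∀ w : G, A.map (MulAut.conj w).toMonoidHom = A := fun w =>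
      map_conj_eq_self (fun y hy => Subgroup.Normal.conj_mem ‹A.Normal› y hy w)
        (fun y hy => by simpa using Subgroup.Normal.conj_mem ‹A.Normal› y hy w⁻¹)
    have hmapQ : ∀ w ∈ (Q : Subgroup G),
        (Q : Subgroup G).map (MulAut.conj w).toMonoidHom = (Q : Subgroup G) :=
      fun w hw => map_conj_eq_self
        (fun y hy => mul_mem (mul_mem hw hy) (inv_mem hw))
        (fun y hy => mul_mem (mul_mem (inv_mem hw) hy) hw)
    have hmapK_Q : ∀ w ∈ (Q : Subgroup G), K.map (MulAut.conj w).toMonoidHom = K :=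
      fun w hw => by rw [hKdef, Subgroup.map_commutator, hmapA, hmapQ w hw]
    have hnorm : N ≤ Subgroup.normalizer (K : Set G) := by
      rw [hNdef]
      refine sup_le ?_ ?_
      · intro x hx
        rw [Subgroup.mem_normalizer_iff]
        intro n
        constructor
        · intro hn
          rw [← hmapK_Q x hx]
          exact ⟨n, hn, rfl⟩
        · intro hn
          have : n ∈ K.map (MulAut.conj x⁻¹).toMonoidHom :=
            ⟨x * n * x⁻¹, hn, by
              simp only [MulEquiv.coe_toMonoidHom, MulAut.conj_apply]
              group⟩
          rwa [hmapK_Q x⁻¹ (inv_mem hx)] at this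
      · intro x hx
        rw [Subgroup.mem_normalizer_iff]
        intro n
        constructor
        · intro hn
          have : x * n * x⁻¹ = n := by
            rw [Subgroup.mul_comm_of_mem_isMulCommutative A hx (hKA hn)]
            group
          rwa [this]
        · intro hn
          have hxnx : x * n * x⁻¹ ∈ A := hKA hn
          have hnA : n ∈ A := by
            have : n = x⁻¹ * (x * n * x⁻¹) * x := by group
            rw [this]
            exact mul_mem (mul_mem (inv_mem hx) hxnx) hx
          have : x * n * x⁻¹ = n := by
            rw [Subgroup.mul_comm_of_mem_isMulCommutative A hx hnA]
            group
          rwa [this] at hn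
    constructor
    intro n hn g
    -- strategy: g • Q = h⁻¹ • Q for some h ∈ N, then conjugation by g fixes K
    have h2 : ↑(g • Q) ≤ N := by
      intro y hy
      rw [Sylow.coe_subgroup_smul] at hy
      obtain ⟨x, hx, rfl⟩ := (Subgroup.mem_smul_pointwise_iff_exists _ _ _).mp hy
      simpa using hN.conj_mem x (hQN hx) g
    obtain ⟨h, hh⟩ := MulAction.exists_smul_eq N ((g • Q).subtype h2) (Q.subtype hQN)
    simp_rw [Sylow.smul_subtype, Subgroup.smul_def, smul_smul] at hh
    have hh' : ((h : G) * g) • Q = Q := Sylow.subtype_injective hh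
    have hgQ : g • Q = ((h : G))⁻¹ • Q := by
      have h3 := congrArg (fun P : Sylow q G => ((h : G))⁻¹ • P) hh'
      simp only [smul_smul, inv_mul_cancel_left] at h3
      exact h3
    have hmem : g * n * g⁻¹ ∈ K.map (MulAut.conj g).toMonoidHom := ⟨n, hn, rfl⟩
    have hsmul_eq : ∀ w : G, (Q : Subgroup G).map (MulAut.conj w).toMonoidHom
        = ((w • Q : Sylow q G) : Subgroup G) := by
      intro w
      rw [Sylow.coe_subgroup_smul]
      rfl
    have hKmap : K.map (MulAut.conj g).toMonoidHom = K := by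
      have hhinv : (h : G)⁻¹ ∈ Subgroup.normalizer (K : Set G) := inv_mem (hnorm h.2)
      have hhmem : (h : G)⁻¹ ∈ N := inv_mem h.2
      calc K.map (MulAut.conj g).toMonoidHom
          = ⁅A, ((g • Q : Sylow q G) : Subgroup G)⁆ := by
            rw [hKdef, Subgroup.map_commutator, hmapA, hsmul_eq]
        _ = ⁅A, (((((h : G))⁻¹ • Q : Sylow q G)) : Subgroup G)⁆ := by rw [hgQ]
        _ = ⁅A.map (MulAut.conj ((h : G))⁻¹).toMonoidHom,
              (Q : Subgroup G).map (MulAut.conj ((h : G))⁻¹).toMonoidHom⁆ := by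
            rw [hmapA, hsmul_eq]
        _ = K.map (MulAut.conj ((h : G))⁻¹).toMonoidHom := by
            rw [hKdef, Subgroup.map_commutator]
        _ = K := map_conj_eq_self
            (fun y hy => (Subgroup.mem_normalizer_iff.mp hhinv y).mp hy)
            (fun y hy => by
              have := (Subgroup.mem_normalizer_iff.mp (hnorm h.2) y).mp hy
              simpa using this)
    rw [hKmap] at hmem
    exact hmem
end
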